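/- In a finite group G, for every k ≥ 2 the subgroup γ_k*(G) generated by all γ_k*-commutators equals the nilpotent residual γ_∞(G), the last term of the lower central series of G. -/

import Mathlib

open scoped commutatorElement

/-- The set of `γₖ*`-commutators of a group, indexed so that
`gammaStarSet G k` is the set of `γₖ*`-commutators: every element is a
`γ₁*`-commutator, and for `k ≥ 2` an element `g` is a `γₖ*`-commutator if
`g = ⁅a, b⁆` where `a` is a power of a `γ_{k-1}*`-commutator, `b ∈ G`, and
the orders of `a` and `b` are coprime. -/
def gammaStarSet (G : Type*) [Group G] : ℕ → Set G
  | 0 => Set.univ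
  | 1 => Set.univ
  | (k + 2) => {g : G | ∃ a b : G,
      (∃ x ∈ gammaStarSet G (k + 1), ∃ n : ℕ, a = x ^ n) ∧
      Nat.Coprime (orderOf a) (orderOf b) ∧ g = ⁅a, b⁆}

open Subgroup


section Arith

lemma coprime_div_gcd_pow (m n : ℕ) (hm : m ≠ 0) :
    Nat.Coprime (m / Nat.gcd m (n ^ m)) n := by
  by_cases hn : n = 0
  · subst hn
    rw [zero_pow hm, Nat.gcd_zero_right, Nat.div_self (Nat.pos_of_ne_zero hm)]
    exact Nat.coprime_one_left _
  by_contra hco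
  obtain ⟨p, pp, hpv, hpn⟩ := Nat.Prime.not_coprime_iff_dvd.mp hco
  set g := Nat.gcd m (n ^ m) with hg
  have hgm : g ∣ m := Nat.gcd_dvd_left _ _
  have hgn : g ∣ n ^ m := Nat.gcd_dvd_right _ _
  have hg0 : g ≠ 0 := fun h => hm (Nat.eq_zero_of_gcd_eq_zero_left h)
  have hnm0 : n ^ m ≠ 0 := pow_ne_zero _ hn
  have h1 : g * p ∣ m := (Nat.dvd_div_iff_mul_dvd hgm).mp hpv
  have h2 : g * p ∣ n ^ m := by
    rw [← Nat.factorization_le_iff_dvd (Nat.mul_ne_zero hg0 pp.pos.ne') hnm0]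
    intro q
    by_cases hq : q = p
    · subst hq
      have e1 : (g * q).factorization q = g.factorization q + 1 := by
        rw [Nat.factorization_mul hg0 pp.pos.ne', pp.factorization]
        simp
      have e2 : (n ^ m).factorization q = m * n.factorization q := by
        rw [Nat.factorization_pow]; simp [mul_comm]
      have e3 : g.factorization q ≤ m.factorization q :=
        (Nat.factorization_le_iff_dvd hg0 hm).mpr hgm q
      have e4 : m.factorization q < m := Nat.factorization_lt _ hm
      have e5 : 1 ≤ n.factorization q :=
        (Nat.Prime.dvd_iff_one_le_factorization pp hn).mp hpn
      rw [e1, e2]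
      calc g.factorization q + 1 ≤ m := by omega
        _ ≤ m * n.factorization q := Nat.le_mul_of_pos_right m e5
    · have e1 : (g * p).factorization q = g.factorization q := by
        rw [Nat.factorization_mul hg0 pp.pos.ne', pp.factorization]
        simp [Finsupp.single_apply, Ne.symm hq]
      rw [e1]
      exact (Nat.factorization_le_iff_dvd hg0 hnm0).mpr hgn q
  have h5 : g * p ∣ g := Nat.dvd_gcd h1 h2
  have h3 := Nat.le_of_dvd (Nat.pos_of_ne_zero hg0) h5
  have h4 : g * 2 ≤ g * p := Nat.mul_le_mul_left g pp.two_le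
  have := Nat.pos_of_ne_zero hg0
  omega

variable {G : Type*} [Group G]

lemma exists_pow_orderOf_eq [Finite G] (x : G) {u v : ℕ}
    (h : orderOf x = u * v) (huv : Nat.Coprime u v) :
    ∃ s : ℕ, orderOf (x ^ s) = u ∧ s ≡ 1 [MOD u] := by
  have hpos : 0 < orderOf x := orderOf_pos x
  have hu : u ≠ 0 := by rintro rfl; simp [h] at hpos
  have hv : v ≠ 0 := by rintro rfl; simp [h] at hpos
  obtain ⟨s, hs1, hs2⟩ := Nat.chineseRemainder huv 1 0
  have hvs : v ∣ s := (Nat.modEq_zero_iff_dvd).mp hs2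
  have hsu : Nat.Coprime s u := by
    have := hs1.gcd_eq
    simpa [Nat.Coprime, Nat.gcd_comm] using this
  have hgcd : Nat.gcd (orderOf x) s = v := by
    apply Nat.dvd_antisymm
    · have h1 : Nat.gcd (orderOf x) s ∣ u * v := h ▸ Nat.gcd_dvd_left _ _
      have h2 : Nat.Coprime (Nat.gcd (orderOf x) s) u :=
        Nat.Coprime.coprime_dvd_left (Nat.gcd_dvd_right _ _) hsu
      exact (Nat.Coprime.dvd_of_dvd_mul_left h2 h1)
    · exact Nat.dvd_gcd (h ▸ Dvd.intro_left u rfl) hvs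
  refine ⟨s, ?_, hs1⟩
  rw [orderOf_pow x, hgcd, h, Nat.mul_div_cancel _ (Nat.pos_of_ne_zero hv)]

lemma exists_pow_eq_map {Q : Type*} [Group Q] [Finite G] (f : G →* Q) (x : G) :
    ∃ s : ℕ, f (x ^ s) = f x ∧ orderOf (x ^ s) ∣ (orderOf (f x)) ^ (orderOf x) := by
  set m := orderOf x with hm
  set m' := orderOf (f x) with hm'
  have hm0 : m ≠ 0 := (orderOf_pos x).ne'
  set u := Nat.gcd m (m' ^ m) with hu
  have hud : u ∣ m := Nat.gcd_dvd_left _ _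
  have h : m = u * (m / u) := (Nat.mul_div_cancel' hud).symm
  have hcv : Nat.Coprime (m / u) m' := coprime_div_gcd_pow m m' hm0
  have hcuv : Nat.Coprime u (m / u) :=
    ((hcv.pow_right m).coprime_dvd_right (Nat.gcd_dvd_right _ _)).symm
  obtain ⟨s, hord, hmod⟩ := exists_pow_orderOf_eq x h hcuv
  have hm'u : m' ∣ u := Nat.dvd_gcd (orderOf_map_dvd f x) (dvd_pow_self m' hm0)
  refine ⟨s, ?_, ?_⟩
  · rw [map_pow]
    have : s ≡ 1 [MOD m'] := hmod.of_dvd hm'u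
    calc f x ^ s = f x ^ 1 := pow_eq_pow_iff_modEq.mpr this
      _ = f x := pow_one _
  · rw [hord]
    exact Nat.gcd_dvd_right _ _

lemma exists_pow_ordProj [Finite G] (x : G) (p : ℕ) (pp : p.Prime) :
    ∃ s : ℕ, orderOf (x ^ s) = p ^ ((orderOf x).factorization p) := by
  have hm0 : orderOf x ≠ 0 := (orderOf_pos x).ne'
  have h : orderOf x = p ^ ((orderOf x).factorization p) * ordCompl[p] (orderOf x) :=
    (Nat.ordProj_mul_ordCompl_eq_self _ _).symm
  have hco : Nat.Coprime (p ^ ((orderOf x).factorization p)) (ordCompl[p] (orderOf x)) :=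
    Nat.Coprime.pow_left _ (Nat.coprime_ordCompl pp hm0)
  obtain ⟨s, hs, -⟩ := exists_pow_orderOf_eq x h hco
  exact ⟨s, hs⟩

lemma exists_pow_ordCompl [Finite G] (x : G) (p : ℕ) (pp : p.Prime) :
    ∃ s : ℕ, orderOf (x ^ s) = ordCompl[p] (orderOf x) := by
  have hm0 : orderOf x ≠ 0 := (orderOf_pos x).ne'
  have h : orderOf x = ordCompl[p] (orderOf x) * p ^ ((orderOf x).factorization p) := by
    rw [mul_comm]; exact (Nat.ordProj_mul_ordCompl_eq_self _ _).symm
  have hco : Nat.Coprime (ordCompl[p] (orderOf x)) (p ^ ((orderOf x).factorization p)) :=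
    (Nat.Coprime.pow_left _ (Nat.coprime_ordCompl pp hm0)).symm
  obtain ⟨s, hs, -⟩ := exists_pow_orderOf_eq x h hco
  exact ⟨s, hs⟩

end Arith


section Maps

variable {G : Type*} [Group G] {Q : Type*} [Group Q]

lemma gammaStarSet_image_subset (f : G →* Q) :
    ∀ k : ℕ, f '' gammaStarSet G k ⊆ gammaStarSet Q k
  | 0 => by simp [gammaStarSet]
  | 1 => by simp [gammaStarSet]
  | (k + 2) => by
    rintro - ⟨g, ⟨a, b, ⟨x, hx, n, rfl⟩, hco, rfl⟩, rfl⟩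
    refine ⟨f (x ^ n), f b, ⟨f x, gammaStarSet_image_subset f (k + 1) ⟨x, hx, rfl⟩, n, by
      rw [map_pow]⟩, ?_, map_commutatorElement f _ _⟩
    exact Nat.Coprime.coprime_dvd_right (orderOf_map_dvd f b)
      (Nat.Coprime.coprime_dvd_left (orderOf_map_dvd f (x ^ n)) hco)


lemma gammaStarSet_subset_image [Finite G] (f : G →* Q) (hf : Function.Surjective f) :
    ∀ k : ℕ, gammaStarSet Q k ⊆ f '' gammaStarSet G k
  | 0 => by intro g _; obtain ⟨x, rfl⟩ := hf g; exact ⟨x, by simp [gammaStarSet]⟩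
  | 1 => by intro g _; obtain ⟨x, rfl⟩ := hf g; exact ⟨x, by simp [gammaStarSet]⟩
  | (k + 2) => by
    rintro - ⟨ab, bb, ⟨xb, hxb, n, rfl⟩, hco, rfl⟩
    obtain ⟨x, hx, hfx⟩ := gammaStarSet_subset_image f hf (k + 1) hxb
    obtain ⟨s, hfs, hds⟩ := exists_pow_eq_map f (x ^ n)
    obtain ⟨b₀, rfl⟩ := hf bb
    obtain ⟨t, hft, hdt⟩ := exists_pow_eq_map f b₀
    have hfxn : f (x ^ n) = xb ^ n := by rw [map_pow, hfx]
    refine ⟨⁅(x ^ n) ^ s, b₀ ^ t⁆, ⟨(x ^ n) ^ s, b₀ ^ t,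
      ⟨x, hx, n * s, by rw [pow_mul]⟩, ?_, rfl⟩, ?_⟩
    · have d1 : orderOf ((x ^ n) ^ s) ∣ (orderOf (xb ^ n)) ^ (orderOf (x ^ n)) := by
        rwa [hfxn] at hds
      have d2 : orderOf (b₀ ^ t) ∣ (orderOf (f b₀)) ^ (orderOf b₀) := hdt
      exact Nat.Coprime.coprime_dvd_right d2
        (Nat.Coprime.coprime_dvd_left d1 ((hco.pow_left _).pow_right _))
    · rw [map_commutatorElement, hfs, hft, hfxn]

lemma gammaStarSet_conj (c : G) (k : ℕ) {g : G} (hg : g ∈ gammaStarSet G k) :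
    c * g * c⁻¹ ∈ gammaStarSet G k := by
  have := gammaStarSet_image_subset (MulAut.conj c).toMonoidHom k ⟨g, hg, rfl⟩
  simpa using this

lemma closure_normal_of_conj {S : Set G}
    (h : ∀ c : G, ∀ g ∈ S, c * g * c⁻¹ ∈ S) : (Subgroup.closure S).Normal := by
  constructor
  intro n hn g
  have hmap : Subgroup.map (MulAut.conj g).toMonoidHom (closure S) ≤ closure S := by
    rw [MonoidHom.map_closure]
    apply Subgroup.closure_mono
    rintro - ⟨y, hy, rfl⟩
    simpa using h g y hy
  exact hmap ⟨n, hn, by simp⟩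

end Maps

section Residual

variable {G : Type*} [Group G] {Q : Type*} [Group Q]

lemma lcs_succ_eq {G : Type*} [Group G] (n : ℕ) :
    (⊤ : Subgroup G).lowerCentralSeries (n + 1) = ⁅(⊤ : Subgroup G).lowerCentralSeries n, ⊤⁆ := rfl

lemma exists_lcs_eq_iInf [Finite G] :
    ∃ n₀ : ℕ, (⊤ : Subgroup G).lowerCentralSeries n₀ = (⨅ n : ℕ, (⊤ : Subgroup G).lowerCentralSeries n) ∧
      ⁅(⨅ n : ℕ, (⊤ : Subgroup G).lowerCentralSeries n), (⊤ : Subgroup G)⁆ =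
        (⨅ n : ℕ, (⊤ : Subgroup G).lowerCentralSeries n) := by
  have hne : (Set.range fun n => Nat.card ((⊤ : Subgroup G).lowerCentralSeries n)).Nonempty :=
    ⟨_, ⟨0, rfl⟩⟩
  obtain ⟨n₀, hn₀⟩ := Nat.sInf_mem hne
  have hn₀' : Nat.card ((⊤ : Subgroup G).lowerCentralSeries n₀) =
      sInf (Set.range fun n => Nat.card ((⊤ : Subgroup G).lowerCentralSeries n)) := hn₀
  have hmin : ∀ m, Nat.card ((⊤ : Subgroup G).lowerCentralSeries n₀) ≤ Nat.card ((⊤ : Subgroup G).lowerCentralSeries m) := by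
    intro m
    rw [hn₀']
    exact Nat.sInf_le ⟨m, rfl⟩
  have key : ∀ m, n₀ ≤ m → (⊤ : Subgroup G).lowerCentralSeries m = (⊤ : Subgroup G).lowerCentralSeries n₀ := by
    intro m hm
    induction m, hm using Nat.le_induction with
    | base => rfl
    | succ m hm ih =>
      have hle : (⊤ : Subgroup G).lowerCentralSeries (m + 1) ≤ (⊤ : Subgroup G).lowerCentralSeries n₀ :=
        ih ▸ Subgroup.lowerCentralSeries_antitone _ (Nat.le_succ m)
      exact Subgroup.eq_of_le_of_card_ge hle (hmin (m + 1))
  have heq : (⊤ : Subgroup G).lowerCentralSeries n₀ = ⨅ n : ℕ, (⊤ : Subgroup G).lowerCentralSeries n := by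
    apply le_antisymm
    · apply le_iInf
      intro m
      rcases le_total n₀ m with h | h
      · exact (key m h).ge
      · exact Subgroup.lowerCentralSeries_antitone _ h
    · exact iInf_le _ n₀
  refine ⟨n₀, heq, ?_⟩
  rw [← heq, ← lcs_succ_eq]
  exact key (n₀ + 1) (Nat.le_succ n₀)

lemma lcs_map_surj (f : G →* Q) (hf : Function.Surjective f) (n : ℕ) :
    Subgroup.map f ((⊤ : Subgroup G).lowerCentralSeries n) = (⊤ : Subgroup Q).lowerCentralSeries n := by
  induction n with
  | zero =>
    simp only [Subgroup.lowerCentralSeries_zero]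
    rw [← MonoidHom.range_eq_map]
    exact f.range_eq_top_of_surjective hf
  | succ n ih =>
    rw [lcs_succ_eq, lcs_succ_eq, Subgroup.map_commutator, ih]
    congr 1
    rw [← MonoidHom.range_eq_map]
    exact f.range_eq_top_of_surjective hf

lemma residual_normal [Finite G] : (⨅ n : ℕ, (⊤ : Subgroup G).lowerCentralSeries n).Normal := by
  obtain ⟨n₀, heq, -⟩ := exists_lcs_eq_iInf (G := G)
  exact heq ▸ inferInstance

lemma residual_le_of_quotient (f : G →* Q) (hf : Function.Surjective f)
    (h : (⨅ n : ℕ, (⊤ : Subgroup Q).lowerCentralSeries n) = ⊥) :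
    (⨅ n : ℕ, (⊤ : Subgroup G).lowerCentralSeries n) ≤ f.ker := by
  intro x hx
  have : f x ∈ (⨅ n : ℕ, (⊤ : Subgroup Q).lowerCentralSeries n) := by
    apply Subgroup.mem_iInf.mpr
    intro n
    rw [← lcs_map_surj f hf n]
    exact ⟨x, Subgroup.mem_iInf.mp hx n, rfl⟩
  rw [h] at this
  simpa [MonoidHom.mem_ker] using this

lemma quotient_residual_isNilpotent [Finite G] [(⨅ n : ℕ, (⊤ : Subgroup G).lowerCentralSeries n).Normal] :
    Group.IsNilpotent (G ⧸ (⨅ n : ℕ, (⊤ : Subgroup G).lowerCentralSeries n)) := by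
  obtain ⟨n₀, heq, -⟩ := exists_lcs_eq_iInf (G := G)
  rw [Subgroup.nilpotent_iff_lowerCentralSeries]
  refine ⟨n₀, ?_⟩
  rw [← lcs_map_surj (QuotientGroup.mk' _) (QuotientGroup.mk'_surjective _) n₀, heq]
  rw [Subgroup.map_eq_bot_iff, QuotientGroup.ker_mk']
end Residual


universe u

section Nilp

lemma center_nontrivial_of_isNilpotent {K : Type u} [Group K] [Nontrivial K]
    (h : Group.IsNilpotent K) : Nontrivial (Subgroup.center K) := by
  by_contra hc
  have hcb : Subgroup.center K = ⊥ := by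
    rcases Subgroup.bot_or_nontrivial (Subgroup.center K) with h' | h'
    · exact h'
    · exact absurd h' hc
  have hucs : ∀ n, Subgroup.upperCentralSeries K n = ⊥ := by
    intro n
    induction n with
    | zero => simp
    | succ n ih =>
      rw [eq_bot_iff]
      intro x hx
      have hcom : ∀ y : K, x * y * x⁻¹ * y⁻¹ ∈ Subgroup.upperCentralSeries K n :=
        Subgroup.mem_upperCentralSeries_succ_iff.mp hx
      have hxc : x ∈ Subgroup.center K := by
        rw [Subgroup.mem_center_iff]
        intro y
        have h1 := hcom y
        rw [ih, Subgroup.mem_bot] at h1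
        have h3 : x * y * x⁻¹ = y := by
          have h2 : x * y * x⁻¹ * y⁻¹ * y = 1 * y := by rw [h1]
          simpa [mul_assoc] using h2
        calc y * x = x * y * x⁻¹ * x := by rw [h3]
          _ = x * y := by group
      rw [hcb] at hxc
      simpa using hxc
  obtain ⟨n, hn⟩ := h
  obtain ⟨x, y, hxy⟩ := exists_pair_ne K
  have hx : x ∈ Subgroup.upperCentralSeries K n := hn ▸ Subgroup.mem_top x
  have hy : y ∈ Subgroup.upperCentralSeries K n := hn ▸ Subgroup.mem_top y
  rw [hucs n, Subgroup.mem_bot] at hx hy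
  exact hxy (hx.trans hy.symm)

lemma commutator_pow_orderOf_eq_one {K : Type u} [Group K] (a b : K)
    (hz : ⁅a, b⁆ ∈ Subgroup.center K) : ⁅a, b⁆ ^ orderOf b = 1 := by
  set z := ⁅a, b⁆ with hzdef
  have hzc : ∀ g : K, g * z = z * g := Subgroup.mem_center_iff.mp hz
  have habc : a * b * a⁻¹ = z * b := by
    rw [hzdef]
    group
  have key : ∀ j : ℕ, a * b ^ j * a⁻¹ = z ^ j * b ^ j := by
    intro j
    induction j with
    | zero => simp
    | succ j ih =>
      have : a * b ^ (j + 1) * a⁻¹ = (a * b ^ j * a⁻¹) * (a * b * a⁻¹) := by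
        rw [pow_succ]; group
      rw [this, ih, habc]
      have : b ^ j * z = z * b ^ j := hzc _
      calc z ^ j * b ^ j * (z * b) = z ^ j * (b ^ j * z) * b := by group
        _ = z ^ j * (z * b ^ j) * b := by rw [this]
        _ = z ^ (j + 1) * b ^ (j + 1) := by rw [pow_succ, pow_succ]; group
  have := key (orderOf b)
  rw [pow_orderOf_eq_one b] at this
  simpa using this.symm

lemma commute_of_isNilpotent_of_coprime :
    ∀ (c : ℕ) (K : Type u) [Group K] [Finite K], Nat.card K ≤ c →
      Group.IsNilpotent K → ∀ a b : K, Nat.Coprime (orderOf a) (orderOf b) →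
        Commute a b := by
  intro c
  induction c with
  | zero =>
    intro K _ _ hcard
    exact absurd (Nat.card_pos.trans_le hcard) (lt_irrefl 0)
  | succ c IH =>
    intro K _ _ hcard hnil a b hco
    rcases subsingleton_or_nontrivial K with hs | hs
    · have : a = b := Subsingleton.elim a b
      rw [this]
    haveI := center_nontrivial_of_isNilpotent hnil
    set Z := Subgroup.center K with hZ
    have hlt : Nat.card (K ⧸ Z) < Nat.card K := by
      have h1 : Nat.card K = Nat.card (K ⧸ Z) * Nat.card Z :=
        Subgroup.card_eq_card_quotient_mul_card_subgroup Z
      have h2 : 1 < Nat.card Z := Finite.one_lt_card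
      have h3 : 0 < Nat.card (K ⧸ Z) := Nat.card_pos
      nlinarith
    haveI := hnil
    have hnilQ : Group.IsNilpotent (K ⧸ Z) :=
      nilpotent_of_surjective (QuotientGroup.mk' Z) (QuotientGroup.mk'_surjective Z)
    set f := QuotientGroup.mk' Z with hf
    have hcoQ : Nat.Coprime (orderOf (f a)) (orderOf (f b)) :=
      Nat.Coprime.coprime_dvd_right (orderOf_map_dvd f b)
        (Nat.Coprime.coprime_dvd_left (orderOf_map_dvd f a) hco)
    have hcomQ : Commute (f a) (f b) :=
      IH (K ⧸ Z) (by omega) hnilQ (f a) (f b) hcoQ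
    have hzZ : ⁅a, b⁆ ∈ Z := by
      have : f ⁅a, b⁆ = 1 := by
        rw [map_commutatorElement]
        exact commutatorElement_eq_one_iff_commute.mpr hcomQ
      have h9 : ⁅a, b⁆ ∈ f.ker := MonoidHom.mem_ker.mpr this
      rwa [QuotientGroup.ker_mk'] at h9
    have h1 : ⁅a, b⁆ ^ orderOf b = 1 := commutator_pow_orderOf_eq_one a b hzZ
    have hzZ' : ⁅b, a⁆ ∈ Z := by
      rw [← commutatorElement_inv]
      exact Subgroup.inv_mem _ hzZ
    have h2 : ⁅b, a⁆ ^ orderOf a = 1 := commutator_pow_orderOf_eq_one b a hzZ'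
    have d1 : orderOf ⁅a, b⁆ ∣ orderOf b := orderOf_dvd_of_pow_eq_one h1
    have d2 : orderOf ⁅a, b⁆ ∣ orderOf a := by
      have : orderOf ⁅b, a⁆ ∣ orderOf a := orderOf_dvd_of_pow_eq_one h2
      rwa [← commutatorElement_inv, orderOf_inv] at this
    rw [← commutatorElement_eq_one_iff_commute]
    have h3 : orderOf ⁅a, b⁆ ∣ Nat.gcd (orderOf a) (orderOf b) := Nat.dvd_gcd d2 d1
    rw [hco] at h3
    exact orderOf_eq_one_iff.mp (Nat.eq_one_of_dvd_one h3)

end Nilp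
section Final
open Pointwise

variable {H : Type u} [Group H] [Finite H]

lemma orderOf_conj' (c g : H) : orderOf (c * g * c⁻¹) = orderOf g := by
  have := orderOf_injective (MulAut.conj c).toMonoidHom (MulAut.conj c).injective g
  simpa [MulAut.conj_apply] using this

lemma centralizer_normal (M : Subgroup H) [hM : M.Normal] :
    (Subgroup.centralizer (M : Set H)).Normal := by
  constructor
  intro c hc g
  rw [Subgroup.mem_centralizer_iff]
  intro m hm
  have hm' : g⁻¹ * m * g ∈ M := by
    have := hM.conj_mem m hm g⁻¹
    simpa using this
  have h1 : (g⁻¹ * m * g) * c = c * (g⁻¹ * m * g) :=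
    Subgroup.mem_centralizer_iff.mp hc _ hm'
  have h2 : g * ((g⁻¹ * m * g) * c) * g⁻¹ = g * (c * (g⁻¹ * m * g)) * g⁻¹ := by rw [h1]
  calc m * (g * c * g⁻¹) = g * ((g⁻¹ * m * g) * c) * g⁻¹ := by group
    _ = g * (c * (g⁻¹ * m * g)) * g⁻¹ := h2
    _ = (g * c * g⁻¹) * m := by group

theorem final_contradiction
    (X : Set H)
    (hXgen : Subgroup.closure X = ⨅ n : ℕ, (⊤ : Subgroup H).lowerCentralSeries n)
    (hne : (⨅ n : ℕ, (⊤ : Subgroup H).lowerCentralSeries n) ≠ ⊥)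
    (hyp : ∀ x ∈ X, ∀ (n : ℕ) (b : H), Nat.Coprime (orderOf (x ^ n)) (orderOf b) →
      Commute (x ^ n) b)
    (hmin : ∀ N : Subgroup H, N.Normal → N ≠ ⊥ →
      (⨅ n : ℕ, (⊤ : Subgroup H).lowerCentralSeries n) ≤ N) :
    False := by
  classical
  set M : Subgroup H := ⨅ n : ℕ, (⊤ : Subgroup H).lowerCentralSeries n with hMdef
  haveI hMnormal : M.Normal := residual_normal
  obtain ⟨n₀, hlcs, hMcomm⟩ := exists_lcs_eq_iInf (G := H)
  have hXM : X ⊆ (M : Set H) := by rw [← hXgen]; exact Subgroup.subset_closure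
  have CA : ∀ q : ℕ, q.Prime → (∀ m ∈ M, ∃ e : ℕ, orderOf m = q ^ e) → False := by
    intro q hq hall
    haveI := Fact.mk hq
    obtain ⟨P⟩ := (inferInstance : Nonempty (Sylow q H))
    set Kq : Subgroup H := Subgroup.closure {h : H | ¬ q ∣ orderOf h} with hKqdef
    haveI hKqNormal : Kq.Normal := by
      apply closure_normal_of_conj
      intro c g hg
      show ¬ q ∣ orderOf (c * g * c⁻¹)
      rwa [orderOf_conj']
    have hxcom : ∀ x ∈ X, ∀ g ∈ Kq, Commute x g := by
      intro x hx
      have hKle : Kq ≤ Subgroup.centralizer {x} := by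
        rw [hKqdef]
        apply (Subgroup.closure_le _).mpr
        intro h hh
        rw [SetLike.mem_coe, Subgroup.mem_centralizer_iff]
        intro s hs
        rw [Set.eq_of_mem_singleton hs]
        obtain ⟨e, he⟩ := hall x (hXM hx)
        have hco : Nat.Coprime (orderOf (x ^ 1)) (orderOf h) := by
          rw [pow_one, he]
          exact Nat.Coprime.pow_left e ((Nat.Prime.coprime_iff_not_dvd hq).mpr hh)
        have := hyp x hx 1 h hco
        rw [pow_one] at this
        exact this.eq
      intro g hg
      have := Subgroup.mem_centralizer_iff.mp (hKle hg) x (Set.mem_singleton x)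
      exact this
    have hMcent : ∀ m ∈ M, ∀ g ∈ Kq, Commute m g := by
      have hle : M ≤ Subgroup.centralizer (Kq : Set H) := by
        rw [← hXgen]
        apply (Subgroup.closure_le _).mpr
        intro x hx
        rw [SetLike.mem_coe, Subgroup.mem_centralizer_iff]
        intro g hg
        exact (hxcom x hx g hg).symm.eq
      intro m hm g hg
      exact (Subgroup.mem_centralizer_iff.mp (hle hm) g hg).symm
    have hQp : IsPGroup q (H ⧸ Kq) := by
      intro gq
      obtain ⟨h, rfl⟩ := QuotientGroup.mk_surjective gq
      refine ⟨(orderOf h).factorization q, ?_⟩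
      have hmem : h ^ (q ^ (orderOf h).factorization q) ∈ Kq := by
        apply Subgroup.subset_closure
        show ¬ q ∣ orderOf (h ^ q ^ (orderOf h).factorization q)
        have hgcd : Nat.gcd (orderOf h) (q ^ (orderOf h).factorization q) =
            q ^ (orderOf h).factorization q :=
          Nat.gcd_eq_right (Nat.ordProj_dvd _ _)
        rw [orderOf_pow, hgcd]
        exact Nat.not_dvd_ordCompl hq (orderOf_pos h).ne'
      rw [← QuotientGroup.mk_pow, QuotientGroup.eq_one_iff]
      exact hmem
    have htop : (P : Subgroup H) ⊔ Kq = ⊤ := by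
      have h1 : ((P : Subgroup H) ⊔ Kq).index ∣ Kq.index :=
        Subgroup.index_dvd_of_le le_sup_right
      have h2 : ((P : Subgroup H) ⊔ Kq).index ∣ (P : Subgroup H).index :=
        Subgroup.index_dvd_of_le le_sup_left
      obtain ⟨e, he⟩ : ∃ e, Kq.index = q ^ e := by
        have hh : Kq.index = Nat.card (H ⧸ Kq) := rfl
        rw [hh]
        exact IsPGroup.iff_card.mp hQp
      rw [he] at h1
      obtain ⟨j, hj, hje⟩ := (Nat.dvd_prime_pow hq).mp h1
      have hnd : ¬ q ∣ (P : Subgroup H).index := P.not_dvd_index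
      rcases Nat.eq_zero_or_pos j with rfl | hjpos
      · rw [pow_zero] at hje
        exact Subgroup.index_eq_one.mp hje
      · exfalso
        exact hnd (dvd_trans (hje ▸ dvd_pow_self q hjpos.ne') h2)
    have hMcomm' : ⁅M, (⊤ : Subgroup H)⁆ = M := by
      rw [hMdef]
      exact hMcomm
    have hMP : M ≤ ⁅M, (P : Subgroup H)⁆ := by
      conv_lhs => rw [← hMcomm']
      apply Subgroup.commutator_le.mpr
      intro m hm g _
      have hg' : g ∈ ((P : Subgroup H) : Set H) * (Kq : Set H) := by
        rw [← Subgroup.mul_normal]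
        rw [htop]
        trivial
      obtain ⟨u, hu, w, hw, rfl⟩ := hg'
      have hsplit : ⁅m, u * w⁆ = ⁅m, u⁆ * (u * ⁅m, w⁆ * u⁻¹) := by
        simp only [commutatorElement_def]
        group
      have hcw : ⁅m, w⁆ = 1 := commutatorElement_eq_one_iff_commute.mpr (hMcent m hm w hw)
      rw [hsplit, hcw]
      simpa using Subgroup.commutator_mem_commutator hm hu
    set J : Subgroup H := M ⊔ (P : Subgroup H) with hJdef
    have hMq : IsPGroup q M := by
      rintro ⟨m, hm⟩
      obtain ⟨e, he⟩ := hall m hm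
      refine ⟨e, ?_⟩
      have ho : orderOf (⟨m, hm⟩ : M) = q ^ e := by
        rw [Subgroup.orderOf_mk]
        exact he
      rw [← ho]
      exact pow_orderOf_eq_one _
    have hJp : IsPGroup q J := IsPGroup.to_sup_of_normal_left hMq P.isPGroup'
    haveI hJnil : Group.IsNilpotent J := hJp.isNilpotent
    have hstep : ∀ n : ℕ, M ≤ Subgroup.map J.subtype ((⊤ : Subgroup J).lowerCentralSeries n) := by
      intro n
      induction n with
      | zero =>
        rw [Subgroup.lowerCentralSeries_zero]
        have hmt : Subgroup.map J.subtype ⊤ = J := by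
          rw [← MonoidHom.range_eq_map]
          exact J.range_subtype
        rw [hmt]
        exact le_sup_left
      | succ n ih =>
        calc M ≤ ⁅M, (P : Subgroup H)⁆ := hMP
          _ ≤ ⁅Subgroup.map J.subtype ((⊤ : Subgroup J).lowerCentralSeries n),
              Subgroup.map J.subtype ⊤⁆ := by
            apply Subgroup.commutator_mono ih
            have hmt : Subgroup.map J.subtype ⊤ = J := by
              rw [← MonoidHom.range_eq_map]
              exact J.range_subtype
            rw [hmt]
            exact le_sup_right
          _ = Subgroup.map J.subtype ⁅(⊤ : Subgroup J).lowerCentralSeries n, ⊤⁆ :=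
            (Subgroup.map_commutator _ _ _).symm
          _ = Subgroup.map J.subtype ((⊤ : Subgroup J).lowerCentralSeries (n + 1)) := by
            rw [← lcs_succ_eq]
    obtain ⟨c, hc⟩ := Subgroup.nilpotent_iff_lowerCentralSeries.mp hJnil
    have hMbot : M ≤ ⊥ := by
      have := hstep c
      rwa [hc, Subgroup.map_bot] at this
    exact hne (le_bot_iff.mp hMbot)
  -- main case analysis
  have hXne : ∃ x ∈ X, x ≠ (1 : H) := by
    by_contra hcon
    push_neg at hcon
    apply hne
    rw [← hXgen, Subgroup.closure_eq_bot_iff]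
    intro x hx
    exact hcon x hx
  obtain ⟨x, hxX, hx1⟩ := hXne
  have hord1 : orderOf x ≠ 1 := by
    simpa [orderOf_eq_one_iff] using hx1
  obtain ⟨p, hp, hpd⟩ := Nat.exists_prime_and_dvd hord1
  obtain ⟨s, hys⟩ := exists_pow_ordProj x p hp
  set y := x ^ s with hydef
  have hfpos : 0 < (orderOf x).factorization p :=
    hp.factorization_pos_of_dvd (orderOf_pos x).ne' hpd
  have hy1 : y ≠ 1 := by
    intro h
    rw [h, orderOf_one] at hys
    have := Nat.one_lt_pow hfpos.ne' hp.one_lt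
    omega
  have hyM : y ∈ M := M.pow_mem (hXM hxX) s
  set N : Subgroup H := Subgroup.closure {m : H | m ∈ M ∧ ¬ p ∣ orderOf m} with hNdef
  have hNnormal : N.Normal := by
    apply closure_normal_of_conj
    rintro c g ⟨hgM, hgo⟩
    exact ⟨hMnormal.conj_mem g hgM c, by rwa [orderOf_conj']⟩
  have hNM : N ≤ M := (Subgroup.closure_le _).mpr (fun g hg => hg.1)
  by_cases hNbot : N = ⊥
  · refine CA p hp (fun m hm => ?_)
    obtain ⟨t, hot⟩ := exists_pow_ordCompl m p hp
    have hmt : m ^ t ∈ N := Subgroup.subset_closure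
      ⟨M.pow_mem hm t, by rw [hot]; exact Nat.not_dvd_ordCompl hp (orderOf_pos m).ne'⟩
    rw [hNbot, Subgroup.mem_bot] at hmt
    have hoc : ordCompl[p] (orderOf m) = 1 := by
      rw [← hot, hmt, orderOf_one]
    refine ⟨(orderOf m).factorization p, ?_⟩
    have h0 := Nat.ordProj_mul_ordCompl_eq_self (orderOf m) p
    rw [hoc, mul_one] at h0
    exact h0.symm
  · have hMN : M = N := le_antisymm (hmin N hNnormal hNbot) hNM
    have hyC : ∀ m ∈ M, Commute y m := by
      have hNle : N ≤ Subgroup.centralizer {y} := by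
        rw [hNdef]
        apply (Subgroup.closure_le _).mpr
        rintro g ⟨hgM, hgo⟩
        rw [SetLike.mem_coe, Subgroup.mem_centralizer_iff]
        intro s' hs'
        rw [Set.eq_of_mem_singleton hs']
        have hco : Nat.Coprime (orderOf (x ^ s)) (orderOf g) := by
          rw [hys]
          exact Nat.Coprime.pow_left _ ((Nat.Prime.coprime_iff_not_dvd hp).mpr hgo)
        exact (hyp x hxX s g hco).eq
      intro m hm
      have hmN : m ∈ N := hMN ▸ hm
      exact Subgroup.mem_centralizer_iff.mp (hNle hmN) y (Set.mem_singleton y)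
    have hyCM : y ∈ Subgroup.centralizer (M : Set H) := by
      rw [Subgroup.mem_centralizer_iff]
      intro m hm
      exact (hyC m hm).symm.eq
    have hCnormal : (Subgroup.centralizer (M : Set H)).Normal := centralizer_normal M
    have hCne : Subgroup.centralizer (M : Set H) ≠ ⊥ := by
      intro h
      rw [h, Subgroup.mem_bot] at hyCM
      exact hy1 hyCM
    have hMC : M ≤ Subgroup.centralizer (M : Set H) := hmin _ hCnormal hCne
    have habel : ∀ a ∈ M, ∀ b ∈ M, Commute a b := by
      intro a ha b hb
      have : b * a = a * b := Subgroup.mem_centralizer_iff.mp (hMC ha) b hb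
      exact this.symm
    let T : Subgroup H :=
      { carrier := {h : H | h ∈ M ∧ orderOf h ∣ p ^ Nat.card H}
        one_mem' := ⟨one_mem M, by simp⟩
        mul_mem' := by
          rintro a b ⟨haM, hao⟩ ⟨hbM, hbo⟩
          refine ⟨mul_mem haM hbM, ?_⟩
          exact dvd_trans ((habel a haM b hbM).orderOf_mul_dvd_lcm) (Nat.lcm_dvd hao hbo)
        inv_mem' := by
          rintro a ⟨haM, hao⟩
          exact ⟨inv_mem haM, by rwa [orderOf_inv]⟩ }
    have hTnormal : T.Normal := by
      constructor
      rintro a ⟨haM, hao⟩ g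
      exact ⟨hMnormal.conj_mem a haM g, by rwa [orderOf_conj']⟩
    have hyT : y ∈ T := by
      refine ⟨hyM, ?_⟩
      have h1 : p ^ (orderOf x).factorization p ∣ Nat.card H :=
        hys ▸ orderOf_dvd_natCard y
      have h2 : p ^ (orderOf x).factorization p ≤ Nat.card H :=
        Nat.le_of_dvd Nat.card_pos h1
      have h3 : (orderOf x).factorization p < p ^ (orderOf x).factorization p :=
        Nat.lt_pow_self hp.one_lt
      have h4 : (orderOf x).factorization p ≤ Nat.card H := by omega
      rw [hys]
      exact pow_dvd_pow p h4
    have hTne : T ≠ ⊥ := by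
      intro h
      rw [h, Subgroup.mem_bot] at hyT
      exact hy1 hyT
    have hMT : M ≤ T := hmin T hTnormal hTne
    refine CA p hp (fun m hm => ?_)
    obtain ⟨-, hdvd⟩ := hMT hm
    obtain ⟨j, -, hj⟩ := (Nat.dvd_prime_pow hp).mp hdvd
    exact ⟨j, hj⟩

end Final
section Main

theorem subset_residual (j : ℕ) (H : Type u) [Group H] [Finite H] :
    gammaStarSet H (j + 2) ⊆ ((⨅ n : ℕ, (⊤ : Subgroup H).lowerCentralSeries n : Subgroup H) : Set H) := by
  rintro g ⟨a, b, -, hco, rfl⟩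
  haveI := residual_normal (G := H)
  have hnil : Group.IsNilpotent (H ⧸ (⨅ n : ℕ, (⊤ : Subgroup H).lowerCentralSeries n)) :=
    quotient_residual_isNilpotent
  set f := QuotientGroup.mk' (⨅ n : ℕ, (⊤ : Subgroup H).lowerCentralSeries n) with hf
  have hcoQ : Nat.Coprime (orderOf (f a)) (orderOf (f b)) :=
    Nat.Coprime.coprime_dvd_right (orderOf_map_dvd f b)
      (Nat.Coprime.coprime_dvd_left (orderOf_map_dvd f a) hco)
  have hcom : Commute (f a) (f b) :=
    commute_of_isNilpotent_of_coprime (Nat.card (H ⧸ (⨅ n : ℕ, (⊤ : Subgroup H).lowerCentralSeries n)))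
      _ le_rfl hnil _ _ hcoQ
  have h1 : f ⁅a, b⁆ = 1 := by
    rw [map_commutatorElement]
    exact commutatorElement_eq_one_iff_commute.mpr hcom
  have h2 : ⁅a, b⁆ ∈ f.ker := MonoidHom.mem_ker.mpr h1
  rwa [hf, QuotientGroup.ker_mk'] at h2

theorem Ngen (j : ℕ)
    (Xf : (H : Type u) → [Group H] → [Finite H] → Set H)
    (hcl : ∀ (H : Type u) [Group H] [Finite H],
      Subgroup.closure (Xf H) = ⨅ n : ℕ, (⊤ : Subgroup H).lowerCentralSeries n)
    (hpow : ∀ (H : Type u) [Group H] [Finite H], ∀ x ∈ Xf H, ∀ n : ℕ,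
      ∃ w ∈ gammaStarSet H (j + 1), ∃ m : ℕ, x ^ n = w ^ m) :
    ∀ (H : Type u) [Group H] [Finite H], gammaStarSet H (j + 2) ⊆ {1} →
      (⨅ n : ℕ, (⊤ : Subgroup H).lowerCentralSeries n) = ⊥ := by
  suffices h : ∀ (c : ℕ) (H : Type u) [Group H] [Finite H], Nat.card H ≤ c →
      gammaStarSet H (j + 2) ⊆ {1} → (⨅ n : ℕ, (⊤ : Subgroup H).lowerCentralSeries n) = ⊥ by
    intro H _ _ hS
    exact h (Nat.card H) H le_rfl hS
  intro c
  induction c with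
  | zero =>
    intro H _ _ hcard
    exact absurd (Nat.card_pos.trans_le hcard) (lt_irrefl 0)
  | succ c IH =>
    intro H _ _ hcard hS
    by_cases hbot : (⨅ n : ℕ, (⊤ : Subgroup H).lowerCentralSeries n) = ⊥
    · exact hbot
    exfalso
    have hmin : ∀ N : Subgroup H, N.Normal → N ≠ ⊥ →
        (⨅ n : ℕ, (⊤ : Subgroup H).lowerCentralSeries n) ≤ N := by
      intro N hNorm hNbot
      haveI := hNorm
      have hsurj := QuotientGroup.mk'_surjective N
      have hSQ : gammaStarSet (H ⧸ N) (j + 2) ⊆ {1} := by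
        intro g hg
        obtain ⟨g₀, hg₀, rfl⟩ :=
          gammaStarSet_subset_image (QuotientGroup.mk' N) hsurj (j + 2) hg
        have hone : g₀ ∈ ({1} : Set H) := hS hg₀
        rw [Set.mem_singleton_iff] at hone
        simp [hone]
      have hcardQ : Nat.card (H ⧸ N) ≤ c := by
        have h1 := Subgroup.card_eq_card_quotient_mul_card_subgroup N
        have h2 : 1 < Nat.card N := (Subgroup.one_lt_card_iff_ne_bot N).mpr hNbot
        have h3 : 0 < Nat.card (H ⧸ N) := Nat.card_pos
        nlinarith
      have hQbot := IH (H ⧸ N) hcardQ hSQ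
      have hker := residual_le_of_quotient (QuotientGroup.mk' N) hsurj hQbot
      rwa [QuotientGroup.ker_mk'] at hker
    apply final_contradiction (Xf H) (hcl H) hbot ?_ hmin
    intro x hx n b hco
    obtain ⟨w, hw, m, hwm⟩ := hpow H x hx n
    have hmem : ⁅x ^ n, b⁆ ∈ gammaStarSet H (j + 2) :=
      ⟨x ^ n, b, ⟨w, hw, m, hwm⟩, hco, rfl⟩
    have hone := hS hmem
    rw [Set.mem_singleton_iff] at hone
    exact commutatorElement_eq_one_iff_commute.mp hone

theorem ge_dir (j : ℕ)
    (hN : ∀ (H : Type u) [Group H] [Finite H], gammaStarSet H (j + 2) ⊆ {1} →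
      (⨅ n : ℕ, (⊤ : Subgroup H).lowerCentralSeries n) = ⊥)
    (H : Type u) [Group H] [Finite H] :
    (⨅ n : ℕ, (⊤ : Subgroup H).lowerCentralSeries n) ≤ Subgroup.closure (gammaStarSet H (j + 2)) := by
  set N := Subgroup.closure (gammaStarSet H (j + 2)) with hNdef
  haveI : N.Normal := closure_normal_of_conj (fun c g hg => gammaStarSet_conj c _ hg)
  have hsurj := QuotientGroup.mk'_surjective N
  have hSQ : gammaStarSet (H ⧸ N) (j + 2) ⊆ {1} := by
    intro g hg
    obtain ⟨g₀, hg₀, rfl⟩ :=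
      gammaStarSet_subset_image (QuotientGroup.mk' N) hsurj (j + 2) hg
    have hmem : g₀ ∈ N := Subgroup.subset_closure hg₀
    rw [Set.mem_singleton_iff]
    exact (QuotientGroup.eq_one_iff g₀).mpr hmem
  have hQbot := hN (H ⧸ N) hSQ
  have h2 := residual_le_of_quotient (QuotientGroup.mk' N) hsurj hQbot
  rwa [QuotientGroup.ker_mk'] at h2

theorem main_thm : ∀ (j : ℕ) (H : Type u) [Group H] [Finite H],
    Subgroup.closure (gammaStarSet H (j + 2)) = ⨅ n : ℕ, (⊤ : Subgroup H).lowerCentralSeries n := by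
  intro j
  induction j with
  | zero =>
    intro H _ _
    apply le_antisymm
    · exact (Subgroup.closure_le _).mpr (subset_residual 0 H)
    · refine ge_dir 0 (Ngen 0
        (fun H _ _ => ((⨅ n : ℕ, (⊤ : Subgroup H).lowerCentralSeries n : Subgroup H) : Set H)) ?_ ?_) H
      · intro H _ _
        exact Subgroup.closure_eq _
      · intro H _ _ x hx n
        exact ⟨x ^ n, by simp [gammaStarSet], 1, (pow_one _).symm⟩
  | succ j IH =>
    intro H _ _
    apply le_antisymm
    · exact (Subgroup.closure_le _).mpr (subset_residual (j + 1) H)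
    · refine ge_dir (j + 1) (Ngen (j + 1) (fun H _ _ => gammaStarSet H (j + 2)) ?_ ?_) H
      · intro H _ _
        exact IH H
      · intro H _ _ x hx n
        exact ⟨x, hx, n, rfl⟩

end Main

/-- In a finite group, for every `k ≥ 2` the subgroup generated by all
`γₖ*`-commutators is the nilpotent residual `γ_∞(G)`. -/
theorem gammaStar_eq_nilpotentResidual {G : Type*} [Group G] [Finite G]
    (k : ℕ) (hk : 2 ≤ k) :
    Subgroup.closure (gammaStarSet G k) = ⨅ n : ℕ, (⊤ : Subgroup G).lowerCentralSeries n := by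
  obtain ⟨j, rfl⟩ : ∃ j, k = j + 2 := ⟨k - 2, by omega⟩
  exact main_thm j G
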